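/- For a 1-bit quantization of the linear phase profile, i.e., replacing β(x) = −k·A*·x by its nearest value in {0, π}, the resulting response integral ∫_{−L/2}^{L/2} exp(i·q(β(x)))·exp(i·k·A*·x) dx has absolute value strictly less than L whenever k·A*·L/2 ≥ π, where q maps a phase to its nearest point of {0, π} mod 2π. -/

import Mathlib

open MeasureTheory intervalIntegral Set

lemma bdd_meas_intervalIntegrable {f : ℝ → ℝ} {C a b : ℝ}
    (hm : Measurable f) (hb : ∀ x, |f x| ≤ C) :
    IntervalIntegrable f volume a b := by
  rw [intervalIntegrable_iff]
  refine Integrable.mono' (g := fun _ => C) ?_ hm.aestronglyMeasurable ?_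
  · exact integrableOn_const (hs := measure_Ioc_lt_top.ne)
  · exact ae_of_all _ fun x => by simpa using hb x

/-- 1-bit quantizer: rounds a phase (mod 2π) to the nearest point of {0, π}
(ties broken towards 0); a phase is within π/2 of a multiple of 2π iff its
cosine is nonnegative. -/
noncomputable def quant1bit (β : ℝ) : ℝ := if 0 ≤ Real.cos β then 0 else Real.pi

theorem one_bit_quantization_loss (k A L : ℝ)
    (hk : 0 < k) (hA : 0 < A) (hL : 0 < L)
    (hmain : Real.pi ≤ k * A * L / 2) :
    ‖(∫ x in (-L/2)..(L/2),
        Complex.exp (Complex.I * quant1bit (-(k * A * x)))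
          * Complex.exp (Complex.I * (k * A * x)))‖ < L := by
  have hcpos : 0 < k * A := mul_pos hk hA
  set S : ℝ → ℝ := fun x => if 0 ≤ Real.cos (k * A * x) then 1 else -1 with hS
  -- pointwise identity
  have hpt : ∀ x : ℝ, Complex.exp (Complex.I * quant1bit (-(k * A * x)))
      * Complex.exp (Complex.I * (k * A * x))
      = ((|Real.cos (k * A * x)| : ℝ) : ℂ)
        + ((S x * Real.sin (k * A * x) : ℝ) : ℂ) * Complex.I := by
    intro x
    have hexp : Complex.exp (Complex.I * (k * A * x))
        = ((Real.cos (k * A * x) : ℝ) : ℂ)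
          + ((Real.sin (k * A * x) : ℝ) : ℂ) * Complex.I := by
      have h0 : (Complex.I * (k * A * x) : ℂ) = ((k * A * x : ℝ) : ℂ) * Complex.I := by
        push_cast; ring
      rw [h0, Complex.exp_mul_I, ← Complex.ofReal_cos, ← Complex.ofReal_sin]
    simp only [quant1bit, Real.cos_neg, hS]
    split_ifs with h
    · rw [abs_of_nonneg h]
      push_cast
      simp [hexp]
    · rw [abs_of_neg (not_le.mp h)]
      rw [mul_comm Complex.I ((Real.pi : ℝ) : ℂ), Complex.exp_pi_mul_I, hexp]
      push_cast
      ring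
  have hSmeas : Measurable S := by
    apply Measurable.ite _ measurable_const measurable_const
    exact measurableSet_le measurable_const
      ((Real.continuous_cos.comp (continuous_const.mul continuous_id)).measurable)
  have hgmeas : Measurable fun x => S x * Real.sin (k * A * x) :=
    hSmeas.mul ((Real.continuous_sin.comp (continuous_const.mul continuous_id)).measurable)
  have hgbd : ∀ x, |S x * Real.sin (k * A * x)| ≤ 1 := by
    intro x
    rw [abs_mul]
    have h1 : |S x| = 1 := by simp only [hS]; split_ifs <;> simp
    rw [h1, one_mul]
    exact Real.abs_sin_le_one _
  have hgint : ∀ a b : ℝ, IntervalIntegrable (fun x => S x * Real.sin (k * A * x)) volume a b :=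
    fun a b => bdd_meas_intervalIntegrable hgmeas hgbd
  -- oddness
  have hodd : ∀ x : ℝ, S (-x) * Real.sin (k * A * (-x)) = -(S x * Real.sin (k * A * x)) := by
    intro x
    have h1 : k * A * (-x) = -(k * A * x) := by ring
    have h2 : S (-x) = S x := by simp only [hS, h1, Real.cos_neg]
    rw [h1, Real.sin_neg, h2]; ring
  have hzero : (∫ x in (-L/2)..(L/2), S x * Real.sin (k * A * x)) = 0 := by
    have h1 := intervalIntegral.integral_comp_neg (a := 0) (b := L/2)
      (fun x => S x * Real.sin (k * A * x))
    have h2 : (∫ x in (0:ℝ)..(L/2), S (-x) * Real.sin (k * A * (-x)))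
        = -∫ x in (0:ℝ)..(L/2), S x * Real.sin (k * A * x) := by
      rw [← intervalIntegral.integral_neg]
      exact intervalIntegral.integral_congr fun x _ => hodd x
    have h3 : (-L/2 : ℝ) = -(L/2) := by ring
    have h1' : (∫ x in (-(L/2))..(0:ℝ), S x * Real.sin (k * A * x))
        = -∫ x in (0:ℝ)..(L/2), S x * Real.sin (k * A * x) := by
      rw [← h2]
      simpa using h1.symm
    rw [h3, ← intervalIntegral.integral_add_adjacent_intervals (b := 0)
      (hgint _ _) (hgint _ _), h1']
    ring
  -- the real integral of |cos|
  have hcos_cont : Continuous fun x => |Real.cos (k * A * x)| :=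
    (Real.continuous_cos.comp (continuous_const.mul continuous_id)).abs
  have hlt : (∫ x in (-L/2)..(L/2), |Real.cos (k * A * x)|) < L := by
    have hconst : (∫ _x in (-L/2)..(L/2), (1:ℝ)) = L := by
      rw [intervalIntegral.integral_const, smul_eq_mul, mul_one]; ring
    have hlt' : (∫ x in (-L/2)..(L/2), |Real.cos (k * A * x)|)
        < ∫ _x in (-L/2)..(L/2), (1:ℝ) := by
      apply intervalIntegral.integral_lt_integral_of_continuousOn_of_le_of_exists_lt
        (by linarith) hcos_cont.continuousOn continuousOn_const
        (fun x _ => by simpa using Real.abs_cos_le_one (k * A * x))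
      refine ⟨Real.pi / (2 * (k * A)), ⟨?_, ?_⟩, ?_⟩
      · have hp : 0 < Real.pi / (2 * (k * A)) := by
          have := Real.pi_pos; positivity
        linarith
      · have h4 : Real.pi / (2 * (k * A)) ≤ L / 4 := by
          rw [div_le_iff₀ (by positivity)]
          nlinarith [hmain]
        linarith
      · have h5 : k * A * (Real.pi / (2 * (k * A))) = Real.pi / 2 := by
          field_simp
        rw [h5, Real.cos_pi_div_two]
        norm_num
    rwa [hconst] at hlt'
  -- assemble
  have hint1 : IntervalIntegrable (fun x => ((|Real.cos (k * A * x)| : ℝ) : ℂ))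
      volume (-L/2) (L/2) :=
    (Complex.continuous_ofReal.comp hcos_cont).intervalIntegrable _ _
  have hint2 : IntervalIntegrable
      (fun x => ((S x * Real.sin (k * A * x) : ℝ) : ℂ) * Complex.I) volume (-L/2) (L/2) := by
    apply IntervalIntegrable.mul_const
    have hg := hgint (-L/2) (L/2)
    rw [intervalIntegrable_iff] at hg ⊢
    exact (Complex.ofRealCLM : ℝ →L[ℝ] ℂ).integrable_comp hg
  rw [intervalIntegral.integral_congr (fun x _ => hpt x),
    intervalIntegral.integral_add hint1 hint2,
    intervalIntegral.integral_mul_const, integral_ofReal, integral_ofReal,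
    hzero]
  simp only [Complex.ofReal_zero, zero_mul, add_zero, Complex.norm_real, Real.norm_eq_abs]
  rw [abs_of_nonneg (intervalIntegral.integral_nonneg (by linarith)
    (fun x _ => abs_nonneg _))]
  exact hlt
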